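/- (Cryer's lemma) If x is an invertible totally nonnegative n×n real matrix, then all leading principal minors Δ_{[1,k],[1,k]}(x), for k = 1,…,n, are strictly positive. -/

import Mathlib

/-- A square real matrix is totally nonnegative if every minor is nonnegative. -/
def TotallyNonneg {n : ℕ} (x : Matrix (Fin n) (Fin n) ℝ) : Prop :=
  ∀ (k : ℕ) (r c : Fin k → Fin n), StrictMono r → StrictMono c →
    0 ≤ (x.submatrix r c).det

open Matrix Fin

lemma detRowUnit {k : ℕ} (A : Matrix (Fin (k+1)) (Fin (k+1)) ℝ) (i j : Fin (k+1))
    (h : ∀ l, A j l = if l = i then 1 else 0) :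
    A.det = (-1) ^ ((i : ℕ) + (j : ℕ)) * (A.submatrix j.succAbove i.succAbove).det := by
  rw [Matrix.det_succ_row A j, Finset.sum_eq_single i]
  · rw [h i]; simp [add_comm]
  · intro b _ hb; rw [h b]; simp [hb]
  · simp

lemma detColUnit {k : ℕ} (A : Matrix (Fin (k+1)) (Fin (k+1)) ℝ) (i j : Fin (k+1))
    (h : ∀ l, A l j = if l = i then 1 else 0) :
    A.det = (-1) ^ ((i : ℕ) + (j : ℕ)) * (A.submatrix i.succAbove j.succAbove).det := by
  rw [Matrix.det_succ_column A j, Finset.sum_eq_single i]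
  · rw [h i]; simp
  · intro b _ hb; rw [h b]; simp [hb]
  · simp

lemma adj_cof {k : ℕ} (A : Matrix (Fin (k+1)) (Fin (k+1)) ℝ) (i j : Fin (k+1)) :
    A.adjugate i j = (-1) ^ ((i : ℕ) + (j : ℕ)) * (A.submatrix j.succAbove i.succAbove).det := by
  rw [Matrix.adjugate_apply]
  rw [detRowUnit _ i j (by intro l; simp [Pi.single_apply])]
  have : (A.updateRow j (Pi.single i 1)).submatrix j.succAbove i.succAbove
      = A.submatrix j.succAbove i.succAbove := by
    ext a b
    simp [Matrix.updateRow_apply, Fin.succAbove_ne]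
  rw [this]

lemma det_two_col {k : ℕ} (u v : Fin k → ℝ) (r l : Fin k) (hrl : r ≠ l) :
    (Matrix.of fun i j => if j = r then u i else if j = l then v i
        else if i = j then (1:ℝ) else 0).det = u r * v l - u l * v r := by
  have hC : (Matrix.of fun i j => if j = r then u i else if j = l then v i
        else if i = j then (1:ℝ) else 0)
      = 1 + (Matrix.of fun i (t : Fin 2) =>
              if t = 0 then u i - (if i = r then 1 else 0)
              else v i - (if i = l then 1 else 0)) *
            (Matrix.of fun (t : Fin 2) j =>
              if t = 0 then (if j = r then (1:ℝ) else 0)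
              else (if j = l then 1 else 0)) := by
    ext i j
    simp only [Matrix.add_apply, Matrix.mul_apply, Fin.sum_univ_two, Matrix.of_apply,
      Matrix.one_apply, Fin.one_eq_zero_iff, OfNat.ofNat_ne_zero, Nat.succ_ne_self]
    by_cases h1 : j = r
    · subst h1
      simp only [if_pos rfl, if_neg hrl, if_neg (by decide : (1 : Fin 2) ≠ 0)]
      simp only [if_true, if_false]; ring
    · by_cases h2 : j = l
      · subst h2
        simp only [if_pos rfl, if_neg h1, if_neg (by decide : (1 : Fin 2) ≠ 0)]
        simp only [if_true, if_false]; ring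
      · simp only [if_neg h1, if_neg h2, if_neg (by decide : (1 : Fin 2) ≠ 0)]
        simp only [if_true, if_false]; ring
  rw [hC, Matrix.det_one_add_mul_comm, Matrix.det_fin_two]
  simp only [Matrix.add_apply, Matrix.mul_apply, Matrix.of_apply, Matrix.one_apply,
    ite_mul, one_mul, zero_mul, Finset.sum_ite_eq', Finset.mem_univ, if_true,
    if_pos rfl, if_neg (by decide : (0 : Fin 2) ≠ 1), if_neg (by decide : (1 : Fin 2) ≠ 0)]
  simp only [if_pos rfl, if_neg hrl, if_neg (Ne.symm hrl)]
  ring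

lemma TN_det_nonneg {k : ℕ} {A : Matrix (Fin k) (Fin k) ℝ} (h : TotallyNonneg A) :
    0 ≤ A.det := by
  simpa using h k id id strictMono_id strictMono_id

lemma lemL : ∀ (m : ℕ) (A : Matrix (Fin (m+1)) (Fin (m+1)) ℝ), TotallyNonneg A →
    (A.submatrix Fin.castSucc Fin.castSucc).det = 0 → A.det = 0 := by
  rintro (_ | m) A hA h0
  · simp at h0
  by_contra hd
  have hdet : 0 < A.det := lt_of_le_of_ne (TN_det_nonneg hA) (Ne.symm hd)
  have hu : IsUnit A.det := isUnit_iff_ne_zero.mpr hd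
  have hentry : ∀ i j : Fin (m+2), A⁻¹ i j
      = (A.det)⁻¹ * ((-1) ^ ((i:ℕ)+(j:ℕ)) * (A.submatrix j.succAbove i.succAbove).det) := by
    intro i j
    rw [Matrix.inv_def, Matrix.smul_apply, adj_cof, Ring.inverse_eq_inv, smul_eq_mul]
  have hll0 : A⁻¹ (Fin.last (m+1)) (Fin.last (m+1)) = 0 := by
    rw [hentry, Fin.succAbove_last, h0]; ring
  have hAinvdet : A⁻¹.det ≠ 0 := by
    rw [Matrix.det_nonsing_inv, Ring.inverse_eq_inv]
    exact inv_ne_zero hd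
  obtain ⟨c, hc⟩ : ∃ c, A⁻¹ (Fin.last (m+1)) c ≠ 0 := by
    by_contra hcon; push_neg at hcon
    exact hAinvdet (Matrix.det_eq_zero_of_row_eq_zero _ hcon)
  obtain ⟨r, hr⟩ : ∃ r, A⁻¹ r (Fin.last (m+1)) ≠ 0 := by
    by_contra hcon; push_neg at hcon
    exact hAinvdet (Matrix.det_eq_zero_of_column_eq_zero _ hcon)
  have hcll : c ≠ Fin.last (m+1) := fun h => hc (h ▸ hll0)
  have hrll : r ≠ Fin.last (m+1) := fun h => hr (h ▸ hll0)
  obtain ⟨c', hc'⟩ := Fin.exists_castSucc_eq.mpr hcll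
  obtain ⟨r', hr'⟩ := Fin.exists_castSucc_eq.mpr hrll
  have hcn : (c : ℕ) = (c' : ℕ) := by rw [← hc']; rfl
  have hrn : (r : ℕ) = (r' : ℕ) := by rw [← hr']; rfl
  -- positive minors P and Q
  have hP0 : 0 ≤ (A.submatrix c.succAbove Fin.castSucc).det :=
    hA (m+1) _ _ (Fin.strictMono_succAbove c) Fin.strictMono_castSucc
  have hQ0 : 0 ≤ (A.submatrix Fin.castSucc r.succAbove).det :=
    hA (m+1) _ _ Fin.strictMono_castSucc (Fin.strictMono_succAbove r)
  have hcval : A⁻¹ (Fin.last (m+1)) c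
      = (A.det)⁻¹ * ((-1) ^ (((Fin.last (m+1)):ℕ)+(c:ℕ))
          * (A.submatrix c.succAbove Fin.castSucc).det) := by
    rw [hentry, Fin.succAbove_last]
  have hrval : A⁻¹ r (Fin.last (m+1))
      = (A.det)⁻¹ * ((-1) ^ ((r:ℕ)+((Fin.last (m+1)):ℕ))
          * (A.submatrix Fin.castSucc r.succAbove).det) := by
    rw [hentry, Fin.succAbove_last]
  have hPne : (A.submatrix c.succAbove Fin.castSucc).det ≠ 0 := by
    intro h; apply hc; rw [hcval, h]; ring
  have hQne : (A.submatrix Fin.castSucc r.succAbove).det ≠ 0 := by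
    intro h; apply hr; rw [hrval, h]; ring
  -- the matrix C with two columns from A⁻¹
  have hCdet : (Matrix.of fun i j => if j = r then A⁻¹ i c
        else if j = Fin.last (m+1) then A⁻¹ i (Fin.last (m+1))
        else if i = j then (1:ℝ) else 0).det
      = A⁻¹ r c * A⁻¹ (Fin.last (m+1)) (Fin.last (m+1))
        - A⁻¹ (Fin.last (m+1)) c * A⁻¹ r (Fin.last (m+1)) :=
    det_two_col _ _ r (Fin.last (m+1)) hrll
  -- A * C = M
  have hAC : A * (Matrix.of fun i j => if j = r then A⁻¹ i c
        else if j = Fin.last (m+1) then A⁻¹ i (Fin.last (m+1))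
        else if i = j then (1:ℝ) else 0)
      = Matrix.of fun i j => if j = r then (if i = c then (1:ℝ) else 0)
        else if j = Fin.last (m+1) then (if i = Fin.last (m+1) then (1:ℝ) else 0)
        else A i j := by
    have h1 : A * A⁻¹ = 1 := Matrix.mul_nonsing_inv A hu
    ext i j
    rw [Matrix.mul_apply]
    by_cases hj1 : j = r
    · subst hj1
      simp only [Matrix.of_apply, if_pos rfl]
      calc (∑ k, A i k * A⁻¹ k c) = (A * A⁻¹) i c := (Matrix.mul_apply).symm
        _ = _ := by rw [h1]; simp [Matrix.one_apply]
    · by_cases hj2 : j = Fin.last (m+1)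
      · subst hj2
        simp only [Matrix.of_apply, if_neg hj1, if_pos rfl]
        calc (∑ k, A i k * A⁻¹ k (Fin.last (m+1))) = (A * A⁻¹) i (Fin.last (m+1)) :=
              (Matrix.mul_apply).symm
          _ = _ := by rw [h1]; simp [Matrix.one_apply]
      · simp only [Matrix.of_apply, if_neg hj1, if_neg hj2]
        simp [mul_ite, Finset.sum_ite_eq']
  -- determinant of M
  have hMcol : ∀ l, (Matrix.of fun i j => if j = r then (if i = c then (1:ℝ) else 0)
        else if j = Fin.last (m+1) then (if i = Fin.last (m+1) then (1:ℝ) else 0)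
        else A i j) l (Fin.last (m+1)) = if l = Fin.last (m+1) then 1 else 0 := by
    intro l
    simp only [Matrix.of_apply, if_neg (Ne.symm hrll), if_pos rfl, if_true]
  have hMdet : (Matrix.of fun i j => if j = r then (if i = c then (1:ℝ) else 0)
        else if j = Fin.last (m+1) then (if i = Fin.last (m+1) then (1:ℝ) else 0)
        else A i j).det
      = (-1) ^ ((c' : ℕ) + (r' : ℕ))
        * (A.submatrix (Fin.castSucc ∘ c'.succAbove) (Fin.castSucc ∘ r'.succAbove)).det := by
    rw [detColUnit _ (Fin.last (m+1)) (Fin.last (m+1)) hMcol]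
    rw [Fin.succAbove_last]
    have heven : ((-1 : ℝ)) ^ (((Fin.last (m+1)):ℕ) + ((Fin.last (m+1)):ℕ)) = 1 :=
      Even.neg_one_pow ⟨_, rfl⟩
    rw [heven, one_mul]
    have hcol2 : ∀ l, ((Matrix.of fun i j => if j = r then (if i = c then (1:ℝ) else 0)
        else if j = Fin.last (m+1) then (if i = Fin.last (m+1) then (1:ℝ) else 0)
        else A i j).submatrix Fin.castSucc Fin.castSucc) l r' = if l = c' then 1 else 0 := by
      intro l
      by_cases h : l = c'
      · subst h; simp [hr', hc']
      · have hne : Fin.castSucc l ≠ c := by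
          rw [← hc']; exact fun hh => h (Fin.castSucc_inj.mp hh)
        simp [hr', hne, h]
    rw [detColUnit _ c' r' hcol2]
    have hsub : (((Matrix.of fun i j => if j = r then (if i = c then (1:ℝ) else 0)
        else if j = Fin.last (m+1) then (if i = Fin.last (m+1) then (1:ℝ) else 0)
        else A i j).submatrix Fin.castSucc Fin.castSucc).submatrix c'.succAbove r'.succAbove)
        = A.submatrix (Fin.castSucc ∘ c'.succAbove) (Fin.castSucc ∘ r'.succAbove) := by
      ext a b
      simp only [Matrix.submatrix_apply, Matrix.of_apply, Function.comp_apply]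
      rw [if_neg, if_neg]
      · exact (Fin.castSucc_lt_last _).ne
      · rw [← hr']
        exact fun hh => Fin.succAbove_ne r' b (Fin.castSucc_inj.mp hh)
    rw [hsub]
  -- put it together
  have hE : A.det * (A⁻¹ r c * A⁻¹ (Fin.last (m+1)) (Fin.last (m+1))
        - A⁻¹ (Fin.last (m+1)) c * A⁻¹ r (Fin.last (m+1)))
      = (-1) ^ ((c' : ℕ) + (r' : ℕ))
        * (A.submatrix (Fin.castSucc ∘ c'.succAbove) (Fin.castSucc ∘ r'.succAbove)).det := by
    rw [← hCdet, ← hMdet, ← hAC, Matrix.det_mul]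
  have hR0 : 0 ≤ (A.submatrix (Fin.castSucc ∘ c'.succAbove) (Fin.castSucc ∘ r'.succAbove)).det :=
    hA m _ _ (Fin.strictMono_castSucc.comp (Fin.strictMono_succAbove c'))
      (Fin.strictMono_castSucc.comp (Fin.strictMono_succAbove r'))
  have hsign : ((-1 : ℝ)) ^ (((Fin.last (m+1)):ℕ)+(c:ℕ)) * (-1) ^ ((r:ℕ)+((Fin.last (m+1)):ℕ))
      = (-1) ^ ((c' : ℕ) + (r' : ℕ)) := by
    rw [← pow_add]
    have h1 : ((Fin.last (m+1)):ℕ)+(c:ℕ) + ((r:ℕ)+((Fin.last (m+1)):ℕ))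
        = ((c' : ℕ) + (r' : ℕ)) + 2 * ((Fin.last (m+1)):ℕ) := by
      rw [hcn, hrn]; ring
    rw [h1, pow_add, pow_mul, neg_one_sq, one_pow, mul_one]
  have hss : ((-1 : ℝ)) ^ ((c' : ℕ) + (r' : ℕ)) * (-1) ^ ((c' : ℕ) + (r' : ℕ)) = 1 := by
    rw [← pow_add]
    exact Even.neg_one_pow ⟨_, rfl⟩
  rw [hll0, hcval, hrval, mul_zero, zero_sub] at hE
  -- derive R = -(d⁻¹ * (P * Q))
  have hPpos : 0 < (A.submatrix c.succAbove Fin.castSucc).det :=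
    lt_of_le_of_ne hP0 (Ne.symm hPne)
  have hQpos : 0 < (A.submatrix Fin.castSucc r.succAbove).det :=
    lt_of_le_of_ne hQ0 (Ne.symm hQne)
  have hfinal : (A.submatrix (Fin.castSucc ∘ c'.succAbove) (Fin.castSucc ∘ r'.succAbove)).det
      = -((A.det)⁻¹ * ((A.submatrix c.succAbove Fin.castSucc).det
          * (A.submatrix Fin.castSucc r.succAbove).det)) := by
    calc (A.submatrix (Fin.castSucc ∘ c'.succAbove) (Fin.castSucc ∘ r'.succAbove)).det
        = ((-1 : ℝ) ^ ((c' : ℕ) + (r' : ℕ)) * (-1) ^ ((c' : ℕ) + (r' : ℕ)))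
          * (A.submatrix (Fin.castSucc ∘ c'.succAbove) (Fin.castSucc ∘ r'.succAbove)).det := by
          rw [hss, one_mul]
      _ = (-1 : ℝ) ^ ((c' : ℕ) + (r' : ℕ)) * ((-1) ^ ((c' : ℕ) + (r' : ℕ))
          * (A.submatrix (Fin.castSucc ∘ c'.succAbove) (Fin.castSucc ∘ r'.succAbove)).det) := by
          ring
      _ = (-1 : ℝ) ^ ((c' : ℕ) + (r' : ℕ))
          * (A.det * -((A.det)⁻¹ * ((-1) ^ (((Fin.last (m+1)):ℕ)+(c:ℕ))
              * (A.submatrix c.succAbove Fin.castSucc).det)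
            * ((A.det)⁻¹ * ((-1) ^ ((r:ℕ)+((Fin.last (m+1)):ℕ))
              * (A.submatrix Fin.castSucc r.succAbove).det)))) := by rw [hE]
      _ = -( ((-1 : ℝ) ^ ((c' : ℕ) + (r' : ℕ))
              * ((-1) ^ (((Fin.last (m+1)):ℕ)+(c:ℕ)) * (-1) ^ ((r:ℕ)+((Fin.last (m+1)):ℕ))))
            * ((A.det * (A.det)⁻¹) * ((A.det)⁻¹
              * ((A.submatrix c.succAbove Fin.castSucc).det
                * (A.submatrix Fin.castSucc r.succAbove).det)))) := by ring
      _ = -((A.det)⁻¹ * ((A.submatrix c.succAbove Fin.castSucc).det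
              * (A.submatrix Fin.castSucc r.succAbove).det)) := by
          rw [hsign, hss, mul_inv_cancel₀ hd, one_mul, one_mul]
  have hpos : 0 < (A.det)⁻¹ * ((A.submatrix c.succAbove Fin.castSucc).det
      * (A.submatrix Fin.castSucc r.succAbove).det) := by positivity
  rw [hfinal] at hR0
  linarith

theorem stmt5 (n : ℕ) (x : Matrix (Fin n) (Fin n) ℝ)
    (hx : TotallyNonneg x) (hxu : IsUnit x.det) :
    ∀ (k : ℕ) (hk : k ≤ n),
      0 < (x.submatrix (Fin.castLE hk) (Fin.castLE hk)).det := by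
  intro k hk
  have hTN : ∀ (j : ℕ) (hj : j ≤ n), TotallyNonneg (x.submatrix (Fin.castLE hj) (Fin.castLE hj)) := by
    intro j hj k' r' c' hr' hc'
    rw [Matrix.submatrix_submatrix]
    exact hx k' _ _ ((Fin.strictMono_castLE hj).comp hr') ((Fin.strictMono_castLE hj).comp hc')
  have hge : 0 ≤ (x.submatrix (Fin.castLE hk) (Fin.castLE hk)).det := TN_det_nonneg (hTN k hk)
  rcases eq_or_lt_of_le hge with heq | hlt
  · exfalso
    -- propagate the zero up to the full determinant
    have hchain : ∀ (j : ℕ), k ≤ j → ∀ (hj : j ≤ n),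
        (x.submatrix (Fin.castLE hj) (Fin.castLE hj)).det = 0 := by
      intro j hkj
      induction j, hkj using Nat.le_induction with
      | base => intro hj; exact heq.symm
      | succ j hkj ih =>
        intro hj
        have hjn : j ≤ n := le_trans (Nat.le_succ j) hj
        apply lemL j _ (hTN (j+1) hj)
        have hsub : (x.submatrix (Fin.castLE hj) (Fin.castLE hj)).submatrix
            Fin.castSucc Fin.castSucc = x.submatrix (Fin.castLE hjn) (Fin.castLE hjn) := by
          ext a b
          rfl
        rw [hsub]
        exact ih hjn
    have hx0 : x.det = 0 := by
      have := hchain n (le_trans hk (le_refl n)) (le_refl n)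
      have hid : x.submatrix (Fin.castLE (le_refl n)) (Fin.castLE (le_refl n)) = x := by
        ext a b; rfl
      rwa [hid] at this
    exact (isUnit_iff_ne_zero.mp hxu) hx0
  · exact hlt
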